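/- Let q̄ ∈ P(M)^W, and suppose there exist distinct men a, b, c ∈ M and distinct women x, y, z ∈ W such that a, b, c all appear on the preference lists q_x, q_y, q_z and, restricted to {a, b, c}, these lists satisfy: a ≻_x b ≻_x c, b ≻_y c ≻_y a, and c ≻_z a ≻_z b. Then no q̄-stable one-side-querying matching mechanism is OSP for all three of the men a, b, and c. -/

import Mathlib

/-- A preference list over `α` (a totally ordered subset of `α`), represented as a
duplicate-free list, most-preferred member first. Members of `α` not on the list
are unranked (unacceptable). -/
abbrev PrefList (α : Type) : Type := {l : List α // l.Nodup}

/-- `x ≻ y` according to `p`: `x` is ranked above `y` on `p`, or `x` appears on `p`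
while `y` does not. -/
def prefers {α : Type} (p : PrefList α) (x y : α) : Prop :=
  [x, y].Sublist p.val ∨ (x ∈ p.val ∧ y ∉ p.val)

/-- Strict preference over possible outcomes, where `none` means being unmatched:
being matched to someone on one's list is better than being unmatched, which is
better than being matched to someone not on one's list. -/
def outPrefers {α : Type} (p : PrefList α) : Option α → Option α → Prop
  | some x, some y => prefers p x y
  | some x, none => x ∈ p.val
  | none, some y => y ∉ p.val
  | none, none => False

/-- A preference list is full if it ranks every member of the opposite side. -/
def IsFull {α : Type} (p : PrefList α) : Prop := ∀ x : α, x ∈ p.val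

/-- A matching between `M` and `W`: a one-to-one mapping between a subset of `M`
and a subset of `W`, recorded as a partial injective function from men to women
(`μ.toFun m = none` meaning that `m` is unmatched). -/
structure Matching (M W : Type) where
  toFun : M → Option W
  inj : ∀ ⦃m m' : M⦄ ⦃w : W⦄, toFun m = some w → toFun m' = some w → m = m'

/-- Woman `w` strictly prefers man `m` (according to her list `q`) over the partner
matched to her by `μ` (or over remaining unmatched, if `μ` leaves her unmatched). -/
def womanPrefersOver {M W : Type} (q : PrefList M) (μ : Matching M W) (w : W) (m : M) : Prop :=
  (∃ m', μ.toFun m' = some w ∧ prefers q m m') ∨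
    ((∀ m', μ.toFun m' ≠ some w) ∧ m ∈ q.val)

/-- `μ` is stable with respect to men's profile `pbar` and women's profile `qbar`:
there is no man and woman each preferring the other over their match under `μ`, and
no participant is matched with a partner not on their preference list. -/
def IsStable {M W : Type} (pbar : M → PrefList W) (qbar : W → PrefList M)
    (μ : Matching M W) : Prop :=
  ¬ ((∃ m w, outPrefers (pbar m) (some w) (μ.toFun m) ∧ womanPrefersOver (qbar w) μ w m) ∨
     (∃ m w, μ.toFun m = some w ∧ (w ∉ (pbar m).val ∨ m ∉ (qbar w).val)))

/-- `C` is `qbar`-stable: `C pbar` is stable with respect to `pbar` and `qbar` for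
every men's profile `pbar`. -/
def IsStableRule {M W : Type} (qbar : W → PrefList M)
    (C : (M → PrefList W) → Matching M W) : Prop :=
  ∀ pbar, IsStable pbar qbar (C pbar)

/-- `C` is the `M`-optimal stable matching rule `C^qbar`: it maps each men's profile
`pbar` to a stable matching that every man weakly prefers to every stable matching. -/
def IsMOptimalStableRule {M W : Type} (qbar : W → PrefList M)
    (C : (M → PrefList W) → Matching M W) : Prop :=
  ∀ pbar, IsStable pbar qbar (C pbar) ∧
    ∀ μ, IsStable pbar qbar μ → ∀ m, ¬ outPrefers (pbar m) (μ.toFun m) ((C pbar).toFun m)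

/-- `C` is strategy-proof for man `m`. -/
def StrategyProofFor {M W : Type} [DecidableEq M]
    (C : (M → PrefList W) → Matching M W) (m : M) : Prop :=
  ∀ (pbar : M → PrefList W) (p' : PrefList W),
    ¬ outPrefers (pbar m) ((C (Function.update pbar m p')).toFun m) ((C pbar).toFun m)

/-- A women's profile `qbar` is cyclical if there are men `a`, `b`, `c` and women
`x`, `y` with `a ≻ₓ b ≻ₓ c ≻_y a`. -/
def Cyclical {M W : Type} (qbar : W → PrefList M) : Prop :=
  ∃ (a b c : M) (x y : W),
    prefers (qbar x) a b ∧ prefers (qbar x) b c ∧ prefers (qbar y) c a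

/-- A one-side-querying extensive-form matching mechanism for `M` over `W`: a rooted
tree each of whose leaves is labeled by a matching and each of whose internal nodes
queries a man; the edges out of an internal node querying `q` are the fibers of the
function `next` (two preference lists for `q` lie on the same outgoing edge iff they
are routed to the same subtree). -/
inductive Mech (M W : Type) : Type
  | leaf (μ : Matching M W)
  | node (q : M) (next : PrefList W → Mech M W)

/-- The matching rule implemented by a mechanism: route the profile from the root to
a leaf and output that leaf's matching. -/
def Mech.run {M W : Type} : Mech M W → (M → PrefList W) → Matching M W
  | .leaf μ, _ => μ
  | .node q next, pbar => (next (pbar q)).run pbar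

/-- Auxiliary definition of obvious strategy-proofness for man `m`: `P` is the set of
profiles passing through the current node. At each node querying `m`, for all profiles
`pbar`, `pbar'` passing through the node at which `m`'s lists diverge (are routed to
distinct subtrees), the outcome of `pbar'` is not strictly preferred (according to
`pbar m`) to the outcome of `pbar`. -/
def Mech.OSPAux {M W : Type} (m : M) : Mech M W → Set (M → PrefList W) → Prop
  | .leaf _, _ => True
  | .node q next, P =>
      (q = m → ∀ pbar ∈ P, ∀ pbar' ∈ P, next (pbar m) ≠ next (pbar' m) →
        ¬ outPrefers (pbar m) (((next (pbar' m)).run pbar').toFun m)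
            (((next (pbar m)).run pbar).toFun m)) ∧
      ∀ p : PrefList W, Mech.OSPAux m (next p) {pbar ∈ P | next (pbar q) = next p}

/-- `I` is obviously strategy-proof (OSP) for man `m`. -/
def Mech.OSPFor {M W : Type} (I : Mech M W) (m : M) : Prop :=
  Mech.OSPAux m I Set.univ

/-- A matching rule is OSP-implementable if it is implemented by some mechanism that
is OSP for every man. -/
def OSPImplementable {M W : Type} (C : (M → PrefList W) → Matching M W) : Prop :=
  ∃ I : Mech M W, (∀ m : M, I.OSPFor m) ∧ ∀ pbar, I.run pbar = C pbar

/-- A two-sides-querying extensive-form matching mechanism: internal nodes may query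
either a man (about his preference list over `W`) or a woman (about her preference
list over `M`). -/
inductive Mech2 (M W : Type) : Type
  | leaf (μ : Matching M W)
  | nodeM (q : M) (next : PrefList W → Mech2 M W)
  | nodeW (q : W) (next : PrefList M → Mech2 M W)

/-- The two-sides-querying matching rule implemented by a two-sides-querying mechanism. -/
def Mech2.run {M W : Type} :
    Mech2 M W → (M → PrefList W) → (W → PrefList M) → Matching M W
  | .leaf μ, _, _ => μ
  | .nodeM q next, pbar, qbar => (next (pbar q)).run pbar qbar
  | .nodeW q next, pbar, qbar => (next (qbar q)).run pbar qbar

/-- Auxiliary definition of obvious strategy-proofness of a two-sides-querying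
mechanism for man `m`; `P` is the set of two-sided profiles passing through the
current node. -/
def Mech2.OSPAux {M W : Type} (m : M) :
    Mech2 M W → Set ((M → PrefList W) × (W → PrefList M)) → Prop
  | .leaf _, _ => True
  | .nodeM q next, P =>
      (q = m → ∀ r ∈ P, ∀ r' ∈ P, next (r.1 m) ≠ next (r'.1 m) →
        ¬ outPrefers (r.1 m) (((next (r'.1 m)).run r'.1 r'.2).toFun m)
            (((next (r.1 m)).run r.1 r.2).toFun m)) ∧
      ∀ p : PrefList W, Mech2.OSPAux m (next p) {r ∈ P | next (r.1 q) = next p}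
  | .nodeW q next, P =>
      ∀ p : PrefList M, Mech2.OSPAux m (next p) {r ∈ P | next (r.2 q) = next p}

/-- A two-sides-querying mechanism `I` is obviously strategy-proof (OSP) for man `m`. -/
def Mech2.OSPForM {M W : Type} (I : Mech2 M W) (m : M) : Prop :=
  Mech2.OSPAux m I Set.univ

/-! ### Auxiliary development for Statement 9 -/

section Aux

variable {M W : Type}

/-- The empty preference list. -/
abbrev emptyPL : PrefList W := ⟨[], List.nodup_nil⟩

/-- Singleton preference list. -/
abbrev pl1 (w : W) : PrefList W := ⟨[w], List.nodup_singleton w⟩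

/-- Two-element preference list. -/
abbrev pl2 (w w' : W) (h : w ≠ w') : PrefList W := ⟨[w, w'], by simp [h]⟩

/-- The men's profile in which `a, b, c` get the given lists and everyone else the
empty list. -/
def prof3 [DecidableEq M] (a b c : M) (ta tb tc : PrefList W) : M → PrefList W :=
  fun m => if m = a then ta else if m = b then tb else if m = c then tc else emptyPL

lemma prof3_a [DecidableEq M] (a b c : M) (ta tb tc : PrefList W) :
    prof3 a b c ta tb tc a = ta := by simp [prof3]

lemma prof3_b [DecidableEq M] (a b c : M) (ta tb tc : PrefList W) (hab : a ≠ b) :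
    prof3 a b c ta tb tc b = tb := by
  unfold prof3; rw [if_neg (Ne.symm hab), if_pos rfl]

lemma prof3_c [DecidableEq M] (a b c : M) (ta tb tc : PrefList W)
    (hac : a ≠ c) (hbc : b ≠ c) :
    prof3 a b c ta tb tc c = tc := by
  unfold prof3; rw [if_neg (Ne.symm hac), if_neg (Ne.symm hbc), if_pos rfl]

lemma prof3_o [DecidableEq M] (a b c : M) (ta tb tc : PrefList W) (m : M)
    (h1 : m ≠ a) (h2 : m ≠ b) (h3 : m ≠ c) :
    prof3 a b c ta tb tc m = emptyPL := by
  unfold prof3; rw [if_neg h1, if_neg h2, if_neg h3]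

lemma matched_mem {pbar : M → PrefList W} {qbar : W → PrefList M} {μ : Matching M W}
    (h : IsStable pbar qbar μ) {m : M} {w : W} (hm : μ.toFun m = some w) :
    w ∈ (pbar m).val := by
  by_contra hw
  exact h (Or.inr ⟨m, w, hm, Or.inl hw⟩)

lemma no_block {pbar : M → PrefList W} {qbar : W → PrefList M} {μ : Matching M W}
    (h : IsStable pbar qbar μ) {m : M} {w : W}
    (h1 : outPrefers (pbar m) (some w) (μ.toFun m))
    (h2 : womanPrefersOver (qbar w) μ w m) : False :=
  h (Or.inl ⟨m, w, h1, h2⟩)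

/-- Forced outcome: in profile `a : [y]`, `c : [y, x]` (with `y` preferring `c`
over `a`), the man `a` is unmatched in every stable matching. -/
lemma forcedB {pbar : M → PrefList W} {qbar : W → PrefList M} {μ : Matching M W}
    (a c : M) (x y : W) (hac : a ≠ c)
    (hy2 : prefers (qbar y) c a)
    (hpa : (pbar a).val = [y]) (hpc : (pbar c).val = [y, x])
    (h : IsStable pbar qbar μ) : μ.toFun a = none := by
  cases hma : μ.toFun a with
  | none => rfl
  | some w =>
    exfalso
    have hw : w = y := by
      have := matched_mem h hma; rw [hpa] at this; simpa using this
    rw [hw] at hma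
    refine no_block h (m := c) (w := y) ?_ (Or.inl ⟨a, hma, hy2⟩)
    cases hmc : μ.toFun c with
    | none => show y ∈ (pbar c).val; rw [hpc]; simp
    | some w' =>
      have hw' := matched_mem h hmc
      rw [hpc] at hw'; simp at hw'
      show prefers (pbar c) y w'
      rcases hw' with rfl | rfl
      · exact absurd (μ.inj hma hmc) hac
      · exact Or.inl (by rw [hpc])

/-- Forced outcome: if `a`'s list is `[y]` or `[y, x]` and no other man lists `y`,
then `a` is matched to `y` in every stable matching. -/
lemma forcedA {pbar : M → PrefList W} {qbar : W → PrefList M} {μ : Matching M W}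
    (a b c : M) (x y : W)
    (hpa : (pbar a).val = [y] ∨ (pbar a).val = [y, x])
    (hyb : y ∉ (pbar b).val) (hyc : y ∉ (pbar c).val)
    (ho : ∀ m, m ≠ a → m ≠ b → m ≠ c → pbar m = emptyPL)
    (hay : a ∈ (qbar y).val)
    (h : IsStable pbar qbar μ) : μ.toFun a = some y := by
  by_contra hne
  have hym : ∀ m', μ.toFun m' ≠ some y := by
    intro m' hm'
    have hmem := matched_mem h hm'
    by_cases h1 : m' = a
    · exact hne (h1 ▸ hm')
    · by_cases h2 : m' = b
      · exact hyb (h2 ▸ hmem)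
      · by_cases h3 : m' = c
        · exact hyc (h3 ▸ hmem)
        · rw [ho m' h1 h2 h3] at hmem; simp [emptyPL] at hmem
  refine no_block h (m := a) (w := y) ?_ (Or.inr ⟨hym, hay⟩)
  cases hma : μ.toFun a with
  | none =>
    show y ∈ (pbar a).val
    rcases hpa with h4 | h4 <;> rw [h4] <;> simp
  | some w =>
    show prefers (pbar a) y w
    have hw := matched_mem h hma
    rcases hpa with h4 | h4 <;> rw [h4] at hw <;> simp at hw
    · subst hw; exact absurd hma hne
    · rcases hw with rfl | rfl
      · exact absurd hma hne
      · exact Or.inl (by rw [h4])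

/-- Forced outcome: in profile `a : [z, y]`, `b : [x, z]`, `c : [x, z]`, the man
`a` is matched to `y` in every stable matching. -/
lemma forcedC {pbar : M → PrefList W} {qbar : W → PrefList M} {μ : Matching M W}
    (a b c : M) (x y z : W)
    (hab : a ≠ b) (hac : a ≠ c) (hbc : b ≠ c)
    (hxy : x ≠ y) (hxz : x ≠ z) (hyz : y ≠ z)
    (hz1 : prefers (qbar z) c a) (hx2 : prefers (qbar x) b c)
    (hbx : b ∈ (qbar x).val) (hay : a ∈ (qbar y).val)
    (hpa : (pbar a).val = [z, y]) (hpb : (pbar b).val = [x, z])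
    (hpc : (pbar c).val = [x, z])
    (ho : ∀ m, m ≠ a → m ≠ b → m ≠ c → pbar m = emptyPL)
    (h : IsStable pbar qbar μ) : μ.toFun a = some y := by
  have hz : μ.toFun a ≠ some z := by
    intro hma
    have hb' : μ.toFun b = none ∨ μ.toFun b = some x := by
      cases hmb : μ.toFun b with
      | none => exact Or.inl rfl
      | some w =>
        have hw := matched_mem h hmb
        rw [hpb] at hw; simp at hw
        rcases hw with rfl | rfl
        · exact Or.inr rfl
        · exact absurd (μ.inj hma hmb) hab
    have hc' : μ.toFun c = none ∨ μ.toFun c = some x := by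
      cases hmc : μ.toFun c with
      | none => exact Or.inl rfl
      | some w =>
        have hw := matched_mem h hmc
        rw [hpc] at hw; simp at hw
        rcases hw with rfl | rfl
        · exact Or.inr rfl
        · exact absurd (μ.inj hma hmc) hac
    rcases hb' with hb0 | hbx'
    · rcases hc' with hc0 | hcx'
      · -- x is unmatched: (b, x) blocks
        have hxu : ∀ m', μ.toFun m' ≠ some x := by
          intro m' hm'
          by_cases h1 : m' = a
          · subst h1; rw [hma] at hm'
            exact hxz (Option.some.inj hm').symm
          · by_cases h2 : m' = b
            · subst h2; rw [hb0] at hm'; exact nomatch hm'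
            · by_cases h3 : m' = c
              · subst h3; rw [hc0] at hm'; exact nomatch hm'
              · have := matched_mem h hm'
                rw [ho m' h1 h2 h3] at this; simp [emptyPL] at this
        refine no_block h (m := b) (w := x) ?_ (Or.inr ⟨hxu, hbx⟩)
        rw [hb0]; show x ∈ (pbar b).val; rw [hpb]; simp
      · -- c holds x, b unmatched: (b, x) blocks
        refine no_block h (m := b) (w := x) ?_ (Or.inl ⟨c, hcx', hx2⟩)
        rw [hb0]; show x ∈ (pbar b).val; rw [hpb]; simp
    · rcases hc' with hc0 | hcx'
      · -- a holds z, c unmatched: (c, z) blocks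
        refine no_block h (m := c) (w := z) ?_ (Or.inl ⟨a, hma, hz1⟩)
        rw [hc0]; show z ∈ (pbar c).val; rw [hpc]; simp
      · exact absurd (μ.inj hbx' hcx') hbc
  by_contra hne
  have hyu : ∀ m', μ.toFun m' ≠ some y := by
    intro m' hm'
    by_cases h1 : m' = a
    · exact hne (h1 ▸ hm')
    · by_cases h2 : m' = b
      · have := matched_mem h hm'
        rw [h2, hpb] at this; simp at this
        rcases this with e | e
        · exact hxy e.symm
        · exact hyz e
      · by_cases h3 : m' = c
        · have := matched_mem h hm'
          rw [h3, hpc] at this; simp at this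
          rcases this with e | e
          · exact hxy e.symm
          · exact hyz e
        · have := matched_mem h hm'
          rw [ho m' h1 h2 h3] at this; simp [emptyPL] at this
  refine no_block h (m := a) (w := y) ?_ (Or.inr ⟨hyu, hay⟩)
  cases hma : μ.toFun a with
  | none => show y ∈ (pbar a).val; rw [hpa]; simp
  | some w =>
    have hw := matched_mem h hma
    rw [hpa] at hw; simp at hw
    rcases hw with rfl | rfl
    · exact absurd hma hz
    · exact absurd hma hne

end Aux

section Main

variable {M W : Type}

/-- At a node querying `a` at which all three of `a`'s relevant preference lists
(`[y]`, `[y,x]`, `[z,y]`) are still live, obvious strategy-proofness for `a` forces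
all three lists to be routed to the same subtree. -/
lemma node_case (qbar : W → PrefList M) (a b c : M) (x y z : W)
    (hab : a ≠ b) (hac : a ≠ c) (hbc : b ≠ c)
    (hxy : x ≠ y) (hxz : x ≠ z) (hyz : y ≠ z)
    (hay : a ∈ (qbar y).val) (hbx : b ∈ (qbar x).val)
    (hx2 : prefers (qbar x) b c) (hy2 : prefers (qbar y) c a)
    (hz1 : prefers (qbar z) c a)
    (next : PrefList W → Mech M W) (P : Set (M → PrefList W))
    (hosp : ∀ pbar ∈ P, ∀ pbar' ∈ P, next (pbar a) ≠ next (pbar' a) →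
      ¬ outPrefers (pbar a) (((next (pbar' a)).run pbar').toFun a)
          (((next (pbar a)).run pbar).toFun a))
    (t1 t2 t3 : PrefList W)
    (ht1 : t1.val = [y]) (ht2 : t2.val = [y, x]) (ht3 : t3.val = [z, y])
    (E1 E2 E3 : M → PrefList W)
    (hE1a : E1 a = t1) (hE1c : (E1 c).val = [y, x])
    (hE1P : E1 ∈ P) (hE1s : IsStable E1 qbar ((next (E1 a)).run E1))
    (hE2a : E2 a = t2) (hE2b : y ∉ (E2 b).val) (hE2c : y ∉ (E2 c).val)
    (hE2o : ∀ m, m ≠ a → m ≠ b → m ≠ c → E2 m = emptyPL)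
    (hE2P : E2 ∈ P) (hE2s : IsStable E2 qbar ((next (E2 a)).run E2))
    (hE3a : E3 a = t3) (hE3b : (E3 b).val = [x, z]) (hE3c : (E3 c).val = [x, z])
    (hE3o : ∀ m, m ≠ a → m ≠ b → m ≠ c → E3 m = emptyPL)
    (hE3P : E3 ∈ P) (hE3s : IsStable E3 qbar ((next (E3 a)).run E3)) :
    next t1 = next t2 ∧ next t1 = next t3 := by
  have o1 : ((next (E1 a)).run E1).toFun a = none :=
    forcedB a c x y hac hy2 (by rw [hE1a, ht1]) hE1c hE1s
  have key : ∀ E : M → PrefList W, E ∈ P →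
      ((next (E a)).run E).toFun a = some y → next (E1 a) ≠ next (E a) → False := by
    intro E hEP oE hne
    refine hosp E1 hE1P E hEP hne ?_
    rw [o1, oE]
    show y ∈ (E1 a).val
    rw [hE1a, ht1]; simp
  constructor
  · by_contra hne
    have o2 : ((next (E2 a)).run E2).toFun a = some y :=
      forcedA a b c x y (Or.inr (by rw [hE2a, ht2])) hE2b hE2c hE2o hay hE2s
    exact key E2 hE2P o2 (by rw [hE1a, hE2a]; exact hne)
  · by_contra hne
    have o3 : ((next (E3 a)).run E3).toFun a = some y :=
      forcedC a b c x y z hab hac hbc hxy hxz hyz hz1 hx2 hbx hay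
        (by rw [hE3a, ht3]) hE3b hE3c hE3o hE3s
    exact key E3 hE3P o3 (by rw [hE1a, hE3a]; exact hne)

/-- Main induction: no subtree through which all 27 relevant profiles pass, with
stable outcomes, can be OSP for all of `a`, `b`, `c`. -/
lemma main_induction [DecidableEq M] (qbar : W → PrefList M) (a b c : M) (x y z : W)
    (hab : a ≠ b) (hac : a ≠ c) (hbc : b ≠ c)
    (hxy : x ≠ y) (hxz : x ≠ z) (hyz : y ≠ z)
    (hay : a ∈ (qbar y).val) (haz : a ∈ (qbar z).val)
    (hbx : b ∈ (qbar x).val) (hbz : b ∈ (qbar z).val)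
    (hcx : c ∈ (qbar x).val) (hcy : c ∈ (qbar y).val)
    (hx1 : prefers (qbar x) a b) (hx2 : prefers (qbar x) b c)
    (hy1 : prefers (qbar y) b c) (hy2 : prefers (qbar y) c a)
    (hz1 : prefers (qbar z) c a) (hz2 : prefers (qbar z) a b)
    (J : Mech M W) :
    ∀ P : Set (M → PrefList W),
      (∀ ta tb tc : PrefList W,
        (ta.val = [y] ∨ ta.val = [y, x] ∨ ta.val = [z, y]) →
        (tb.val = [z] ∨ tb.val = [z, y] ∨ tb.val = [x, z]) →
        (tc.val = [x] ∨ tc.val = [x, z] ∨ tc.val = [y, x]) →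
        IsStable (prof3 a b c ta tb tc) qbar (J.run (prof3 a b c ta tb tc)) ∧
          prof3 a b c ta tb tc ∈ P) →
      Mech.OSPAux a J P → Mech.OSPAux b J P → Mech.OSPAux c J P → False := by
  have hyx : y ≠ x := Ne.symm hxy
  have hzy : z ≠ y := Ne.symm hyz
  have hzx : z ≠ x := Ne.symm hxz
  induction J with
  | leaf μ =>
    intro P h _ _ _
    have h4 := (h (pl1 y) (pl1 z) (pl1 x) (Or.inl rfl) (Or.inl rfl) (Or.inl rfl)).1
    have h1 := (h (pl1 y) (pl1 z) (pl2 y x hyx) (Or.inl rfl) (Or.inl rfl)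
      (Or.inr (Or.inr rfl))).1
    have oA : μ.toFun a = some y :=
      forcedA a b c x y (Or.inl (by rw [prof3_a]))
        (by rw [prof3_b a b c _ _ _ hab]; simpa using hyz)
        (by rw [prof3_c a b c _ _ _ hac hbc]; simpa using hyx)
        (fun m h1 h2 h3 => prof3_o a b c _ _ _ m h1 h2 h3) hay h4
    have oB : μ.toFun a = none :=
      forcedB a c x y hac hy2 (by rw [prof3_a])
        (by rw [prof3_c a b c _ _ _ hac hbc]) h1
    rw [oB] at oA; exact nomatch oA
  | node q next ih =>
    intro P h ha hb hc
    by_cases hq : q = a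
    · -- the node queries a
      have hosp := ha.1 hq
      have hrun : ∀ E : M → PrefList W, (Mech.node q next).run E = (next (E a)).run E := by
        intro E; rw [hq]; rfl
      obtain ⟨e2, e3⟩ := node_case qbar a b c x y z hab hac hbc hxy hxz hyz hay hbx
        hx2 hy2 hz1 next P hosp (pl1 y) (pl2 y x hyx) (pl2 z y hzy) rfl rfl rfl
        (prof3 a b c (pl1 y) (pl1 z) (pl2 y x hyx))
        (prof3 a b c (pl2 y x hyx) (pl1 z) (pl1 x))
        (prof3 a b c (pl2 z y hzy) (pl2 x z hxz) (pl2 x z hxz))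
        (prof3_a a b c _ _ _) (by rw [prof3_c a b c _ _ _ hac hbc])
        (h (pl1 y) (pl1 z) (pl2 y x hyx) (Or.inl rfl) (Or.inl rfl)
          (Or.inr (Or.inr rfl))).2
        (by rw [← hrun]
            exact (h (pl1 y) (pl1 z) (pl2 y x hyx) (Or.inl rfl) (Or.inl rfl)
              (Or.inr (Or.inr rfl))).1)
        (prof3_a a b c _ _ _)
        (by rw [prof3_b a b c _ _ _ hab]; simpa using hyz)
        (by rw [prof3_c a b c _ _ _ hac hbc]; simpa using hyx)
        (fun m h1 h2 h3 => prof3_o a b c _ _ _ m h1 h2 h3)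
        (h (pl2 y x hyx) (pl1 z) (pl1 x) (Or.inr (Or.inl rfl)) (Or.inl rfl)
          (Or.inl rfl)).2
        (by rw [← hrun]
            exact (h (pl2 y x hyx) (pl1 z) (pl1 x) (Or.inr (Or.inl rfl)) (Or.inl rfl)
              (Or.inl rfl)).1)
        (prof3_a a b c _ _ _)
        (by rw [prof3_b a b c _ _ _ hab])
        (by rw [prof3_c a b c _ _ _ hac hbc])
        (fun m h1 h2 h3 => prof3_o a b c _ _ _ m h1 h2 h3)
        (h (pl2 z y hzy) (pl2 x z hxz) (pl2 x z hxz) (Or.inr (Or.inr rfl))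
          (Or.inr (Or.inr rfl)) (Or.inr (Or.inl rfl))).2
        (by rw [← hrun]
            exact (h (pl2 z y hzy) (pl2 x z hxz) (pl2 x z hxz) (Or.inr (Or.inr rfl))
              (Or.inr (Or.inr rfl)) (Or.inr (Or.inl rfl))).1)
      refine ih (pl1 y) {pbar ∈ P | next (pbar q) = next (pl1 y)} ?_
        (ha.2 (pl1 y)) (hb.2 (pl1 y)) (hc.2 (pl1 y))
      intro ta tb tc hta htb htc
      have hs := h ta tb tc hta htb htc
      have hEq : next (prof3 a b c ta tb tc q) = next (pl1 y) := by
        rw [hq, prof3_a]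
        rcases hta with h' | h' | h'
        · rw [show ta = pl1 y from Subtype.ext h']
        · rw [show ta = pl2 y x hyx from Subtype.ext h']; exact e2.symm
        · rw [show ta = pl2 z y hzy from Subtype.ext h']; exact e3.symm
      have hrun2 : (Mech.node q next).run (prof3 a b c ta tb tc) =
          (next (pl1 y)).run (prof3 a b c ta tb tc) := by
        show (next (prof3 a b c ta tb tc q)).run _ = _
        rw [hEq]
      exact ⟨by rw [← hrun2]; exact hs.1, ⟨hs.2, hEq⟩⟩
    · by_cases hq' : q = b
      · have hosp := hb.1 hq'
        have hrun : ∀ E : M → PrefList W,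
            (Mech.node q next).run E = (next (E b)).run E := by
          intro E; rw [hq']; rfl
        obtain ⟨e2, e3⟩ := node_case qbar b c a y z x hbc (Ne.symm hab) (Ne.symm hac)
          hyz (Ne.symm hxy) (Ne.symm hxz) hbz hcy
          hy2 hz2 hx1 next P hosp (pl1 z) (pl2 z y hzy) (pl2 x z hxz) rfl rfl rfl
          (prof3 a b c (pl2 z y hzy) (pl1 z) (pl1 x))
          (prof3 a b c (pl1 y) (pl2 z y hzy) (pl1 x))
          (prof3 a b c (pl2 y x hyx) (pl2 x z hxz) (pl2 y x hyx))
          (prof3_b a b c _ _ _ hab) (by rw [prof3_a])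
          (h (pl2 z y hzy) (pl1 z) (pl1 x) (Or.inr (Or.inr rfl)) (Or.inl rfl)
            (Or.inl rfl)).2
          (by rw [← hrun]
              exact (h (pl2 z y hzy) (pl1 z) (pl1 x) (Or.inr (Or.inr rfl)) (Or.inl rfl)
                (Or.inl rfl)).1)
          (prof3_b a b c _ _ _ hab)
          (by rw [prof3_c a b c _ _ _ hac hbc]; simpa using hzx)
          (by rw [prof3_a]; simpa using hzy)
          (fun m h1 h2 h3 => prof3_o a b c _ _ _ m h3 h1 h2)
          (h (pl1 y) (pl2 z y hzy) (pl1 x) (Or.inl rfl) (Or.inr (Or.inl rfl))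
            (Or.inl rfl)).2
          (by rw [← hrun]
              exact (h (pl1 y) (pl2 z y hzy) (pl1 x) (Or.inl rfl) (Or.inr (Or.inl rfl))
                (Or.inl rfl)).1)
          (prof3_b a b c _ _ _ hab)
          (by rw [prof3_c a b c _ _ _ hac hbc])
          (by rw [prof3_a])
          (fun m h1 h2 h3 => prof3_o a b c _ _ _ m h3 h1 h2)
          (h (pl2 y x hyx) (pl2 x z hxz) (pl2 y x hyx) (Or.inr (Or.inl rfl))
            (Or.inr (Or.inr rfl)) (Or.inr (Or.inr rfl))).2
          (by rw [← hrun]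
              exact (h (pl2 y x hyx) (pl2 x z hxz) (pl2 y x hyx) (Or.inr (Or.inl rfl))
                (Or.inr (Or.inr rfl)) (Or.inr (Or.inr rfl))).1)
        refine ih (pl1 z) {pbar ∈ P | next (pbar q) = next (pl1 z)} ?_
          (ha.2 (pl1 z)) (hb.2 (pl1 z)) (hc.2 (pl1 z))
        intro ta tb tc hta htb htc
        have hs := h ta tb tc hta htb htc
        have hEq : next (prof3 a b c ta tb tc q) = next (pl1 z) := by
          rw [hq', prof3_b a b c _ _ _ hab]
          rcases htb with h' | h' | h'
          · rw [show tb = pl1 z from Subtype.ext h']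
          · rw [show tb = pl2 z y hzy from Subtype.ext h']; exact e2.symm
          · rw [show tb = pl2 x z hxz from Subtype.ext h']; exact e3.symm
        have hrun2 : (Mech.node q next).run (prof3 a b c ta tb tc) =
            (next (pl1 z)).run (prof3 a b c ta tb tc) := by
          show (next (prof3 a b c ta tb tc q)).run _ = _
          rw [hEq]
        exact ⟨by rw [← hrun2]; exact hs.1, ⟨hs.2, hEq⟩⟩
      · by_cases hq'' : q = c
        · have hosp := hc.1 hq''
          have hrun : ∀ E : M → PrefList W,
              (Mech.node q next).run E = (next (E c)).run E := by
            intro E; rw [hq'']; rfl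
          obtain ⟨e2, e3⟩ := node_case qbar c a b z x y (Ne.symm hac) (Ne.symm hbc) hab
            hzx (Ne.symm hyz) hxy hcx haz
            hz2 hx2 hy1 next P hosp (pl1 x) (pl2 x z hxz) (pl2 y x hyx) rfl rfl rfl
            (prof3 a b c (pl1 y) (pl2 x z hxz) (pl1 x))
            (prof3 a b c (pl1 y) (pl1 z) (pl2 x z hxz))
            (prof3 a b c (pl2 z y hzy) (pl2 z y hzy) (pl2 y x hyx))
            (prof3_c a b c _ _ _ hac hbc) (by rw [prof3_b a b c _ _ _ hab])
            (h (pl1 y) (pl2 x z hxz) (pl1 x) (Or.inl rfl) (Or.inr (Or.inr rfl))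
              (Or.inl rfl)).2
            (by rw [← hrun]
                exact (h (pl1 y) (pl2 x z hxz) (pl1 x) (Or.inl rfl) (Or.inr (Or.inr rfl))
                  (Or.inl rfl)).1)
            (prof3_c a b c _ _ _ hac hbc)
            (by rw [prof3_a]; simpa using hxy)
            (by rw [prof3_b a b c _ _ _ hab]; simpa using hxz)
            (fun m h1 h2 h3 => prof3_o a b c _ _ _ m h2 h3 h1)
            (h (pl1 y) (pl1 z) (pl2 x z hxz) (Or.inl rfl) (Or.inl rfl)
              (Or.inr (Or.inl rfl))).2
            (by rw [← hrun]
                exact (h (pl1 y) (pl1 z) (pl2 x z hxz) (Or.inl rfl) (Or.inl rfl)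
                  (Or.inr (Or.inl rfl))).1)
            (prof3_c a b c _ _ _ hac hbc)
            (by rw [prof3_a])
            (by rw [prof3_b a b c _ _ _ hab])
            (fun m h1 h2 h3 => prof3_o a b c _ _ _ m h2 h3 h1)
            (h (pl2 z y hzy) (pl2 z y hzy) (pl2 y x hyx) (Or.inr (Or.inr rfl))
              (Or.inr (Or.inl rfl)) (Or.inr (Or.inr rfl))).2
            (by rw [← hrun]
                exact (h (pl2 z y hzy) (pl2 z y hzy) (pl2 y x hyx) (Or.inr (Or.inr rfl))
                  (Or.inr (Or.inl rfl)) (Or.inr (Or.inr rfl))).1)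
          refine ih (pl1 x) {pbar ∈ P | next (pbar q) = next (pl1 x)} ?_
            (ha.2 (pl1 x)) (hb.2 (pl1 x)) (hc.2 (pl1 x))
          intro ta tb tc hta htb htc
          have hs := h ta tb tc hta htb htc
          have hEq : next (prof3 a b c ta tb tc q) = next (pl1 x) := by
            rw [hq'', prof3_c a b c _ _ _ hac hbc]
            rcases htc with h' | h' | h'
            · rw [show tc = pl1 x from Subtype.ext h']
            · rw [show tc = pl2 x z hxz from Subtype.ext h']; exact e2.symm
            · rw [show tc = pl2 y x hyx from Subtype.ext h']; exact e3.symm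
          have hrun2 : (Mech.node q next).run (prof3 a b c ta tb tc) =
              (next (pl1 x)).run (prof3 a b c ta tb tc) := by
            show (next (prof3 a b c ta tb tc q)).run _ = _
            rw [hEq]
          exact ⟨by rw [← hrun2]; exact hs.1, ⟨hs.2, hEq⟩⟩
        · -- the node queries someone outside {a, b, c}
          refine ih emptyPL {pbar ∈ P | next (pbar q) = next emptyPL} ?_
            (ha.2 emptyPL) (hb.2 emptyPL) (hc.2 emptyPL)
          intro ta tb tc hta htb htc
          have hs := h ta tb tc hta htb htc
          have hEq : next (prof3 a b c ta tb tc q) = next emptyPL := by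
            rw [prof3_o a b c ta tb tc q hq hq' hq'']
          have hrun2 : (Mech.node q next).run (prof3 a b c ta tb tc) =
              (next emptyPL).run (prof3 a b c ta tb tc) := by
            show (next (prof3 a b c ta tb tc q)).run _ = _
            rw [hEq]
          exact ⟨by rw [← hrun2]; exact hs.1, ⟨hs.2, hEq⟩⟩

end Main

/-- If there are distinct men `a,b,c` and distinct women `x,y,z` such
that `a,b,c` all appear on the lists of `x,y,z` and, restricted to `{a,b,c}`, these
lists satisfy `a ≻ₓ b ≻ₓ c`, `b ≻_y c ≻_y a`, `c ≻_z a ≻_z b`, then no `qbar`-stable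
matching mechanism is OSP for all three of `a`, `b`, and `c`. -/
theorem no_stable_mech_OSP_for_cycle_triplet
    {M W : Type} [Fintype M] [Fintype W]
    (qbar : W → PrefList M) (a b c : M) (x y z : W)
    (hab : a ≠ b) (hac : a ≠ c) (hbc : b ≠ c)
    (hxy : x ≠ y) (hxz : x ≠ z) (hyz : y ≠ z)
    (hmem : ∀ m : M, (m = a ∨ m = b ∨ m = c) →
      ∀ w : W, (w = x ∨ w = y ∨ w = z) → m ∈ (qbar w).val)
    (hx1 : prefers (qbar x) a b) (hx2 : prefers (qbar x) b c)
    (hy1 : prefers (qbar y) b c) (hy2 : prefers (qbar y) c a)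
    (hz1 : prefers (qbar z) c a) (hz2 : prefers (qbar z) a b)
    (I : Mech M W) (hstable : IsStableRule qbar I.run) :
    ¬ (I.OSPFor a ∧ I.OSPFor b ∧ I.OSPFor c) := by
  rintro ⟨ha, hb, hc⟩
  letI : DecidableEq M := Classical.decEq M
  have hay : a ∈ (qbar y).val := hmem a (Or.inl rfl) y (Or.inr (Or.inl rfl))
  have haz : a ∈ (qbar z).val := hmem a (Or.inl rfl) z (Or.inr (Or.inr rfl))
  have hbx : b ∈ (qbar x).val := hmem b (Or.inr (Or.inl rfl)) x (Or.inl rfl)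
  have hbz : b ∈ (qbar z).val := hmem b (Or.inr (Or.inl rfl)) z (Or.inr (Or.inr rfl))
  have hcx : c ∈ (qbar x).val := hmem c (Or.inr (Or.inr rfl)) x (Or.inl rfl)
  have hcy : c ∈ (qbar y).val := hmem c (Or.inr (Or.inr rfl)) y (Or.inr (Or.inl rfl))
  exact main_induction qbar a b c x y z hab hac hbc hxy hxz hyz hay haz hbx hbz hcx hcy
    hx1 hx2 hy1 hy2 hz1 hz2 I Set.univ
    (fun ta tb tc _ _ _ => ⟨hstable _, Set.mem_univ _⟩) ha hb hc
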